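/- Fix ∂ = 0 (type 0). (1) A 4-tuple (Δ^C, Δ^E, 0, Ω), with Δ^C, Δ^E unital quasi-actions of G on C and E and Ω ∈ C²(G;E→C) normalized, satisfies the structure equations (i)–(iv) of the tuple–operator correspondence if and only if Δ^C and Δ^E are representations of G on C and E and DΩ = 0, where D : C^p(G;E→C) → C^{p+1}(G;E→C) is defined by (Dω)(g_0,…,g_p) = Δ^C_{g_0}∘ω(g_1,…,g_p) + Σ_{i=1}^p (−1)^i ω(g_0,…,g_{i−1}g_i,…,g_p) + (−1)^{p+1} ω(g_0,…,g_{p−1})∘Δ^E_{g_p}. (2) If 𝒟 and 𝒟̃ are the representations up to homotopy corresponding to type-0 tuples (Δ^C, Δ^E, 0, Ω) and (Δ̃^C, Δ̃^E, 0, Ω̃), then 𝒟̃ = (1−σ̂)∘𝒟∘(1+σ̂) for some normalized σ ∈ C¹(G;E→C) if and only if Δ^C = Δ̃^C, Δ^E = Δ̃^E, and Ω̃ = Ω − Dσ for some normalized σ ∈ C¹(G;E→C). -/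

import Mathlib

attribute [local instance] Classical.propDecidable

/-- A set-theoretic groupoid with arrow set `G` and object set `M`.
Multiplication `mul g₁ g₂` is meaningful when `src g₁ = tgt g₂`. -/
structure SetGroupoid (G M : Type) where
  src : G → M
  tgt : G → M
  mul : G → G → G
  unit : M → G
  inv : G → G
  src_mul : ∀ g₁ g₂, src g₁ = tgt g₂ → src (mul g₁ g₂) = src g₂
  tgt_mul : ∀ g₁ g₂, src g₁ = tgt g₂ → tgt (mul g₁ g₂) = tgt g₁
  mul_assoc : ∀ g₁ g₂ g₃, src g₁ = tgt g₂ → src g₂ = tgt g₃ →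
      mul (mul g₁ g₂) g₃ = mul g₁ (mul g₂ g₃)
  src_unit : ∀ x, src (unit x) = x
  tgt_unit : ∀ x, tgt (unit x) = x
  unit_mul : ∀ g, mul (unit (tgt g)) g = g
  mul_unit : ∀ g, mul g (unit (src g)) = g
  src_inv : ∀ g, src (inv g) = tgt g
  tgt_inv : ∀ g, tgt (inv g) = src g
  mul_inv : ∀ g, mul g (inv g) = unit (tgt g)
  inv_mul : ∀ g, mul (inv g) g = unit (src g)

/-- Transport an element of a family of types along an equality of indices. -/
def fcst {α : Type} (F : α → Type) {a b : α} (h : a = b) (v : F a) : F b := h ▸ v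

/-- Transport as a linear map, for a family of real vector spaces. -/
def lcast {α : Type} (F : α → Type) [∀ a, AddCommGroup (F a)] [∀ a, Module ℝ (F a)]
    {a b : α} (h : a = b) : F a →ₗ[ℝ] F b where
  toFun := fcst F h
  map_add' := by subst h; intro u v; rfl
  map_smul' := by subst h; intro r v; rfl

theorem fcst_fcst {α : Type} (F : α → Type) {a b : α} (h : a = b) (v : F a) :
    fcst F h.symm (fcst F h v) = v := by cases h; rfl

namespace SetGroupoid

variable {G M : Type} (𝒢 : SetGroupoid G M)

/-- `v : Fin p → G` is a composable string: `s(gᵢ) = t(gᵢ₊₁)`. -/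
def IsComposable (p : ℕ) (v : Fin p → G) : Prop :=
  ∀ (i : ℕ) (h : i + 1 < p), 𝒢.src (v ⟨i, by omega⟩) = 𝒢.tgt (v ⟨i + 1, h⟩)

/-- An anchored point: a point of `M` together with a composable string whose
first target is the anchor (for `p = 0` this is just a point of `M`). -/
def IsAnchored (p : ℕ) (z : M × (Fin p → G)) : Prop :=
  𝒢.IsComposable p z.2 ∧ ∀ h : 0 < p, 𝒢.tgt (z.2 ⟨0, h⟩) = z.1

/-- The space `G⁽ᵖ⁾` of composable `p`-strings (anchored at the target of the
first arrow; for `p = 0` this is `M`). -/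
abbrev APt (p : ℕ) := { z : M × (Fin p → G) // 𝒢.IsAnchored p z }

/-- Real-valued smooth-groupoid `p`-cochains `C^p(G)`. -/
abbrev Cochain (p : ℕ) := 𝒢.APt p → ℝ

/-- `E`-valued groupoid `p`-cochains `C^p(G;E)`; the value on `(g₁,…,g_p)` lies
in the fiber over `t(g₁)` (over the anchor). -/
abbrev ECochain (E : M → Type) (p : ℕ) := ∀ z : 𝒢.APt p, E z.1.1

/-- Extension of a real cochain by `0` to arbitrary (possibly non-composable) strings. -/
noncomputable def extC (p : ℕ) (f : 𝒢.Cochain p) : M × (Fin p → G) → ℝ :=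
  fun z => if h : 𝒢.IsAnchored p z then f ⟨z, h⟩ else 0

/-- Extension of a vector-valued cochain by `0`. -/
noncomputable def extE (E : M → Type) [∀ x, AddCommGroup (E x)] [∀ x, Module ℝ (E x)]
    (p : ℕ) (ω : 𝒢.ECochain E p) : ∀ z : M × (Fin p → G), E z.1 :=
  fun z => if h : 𝒢.IsAnchored p z then ω ⟨z, h⟩ else 0

/-- The `j`-th simplicial face of a `(p+1)`-string (as a raw tuple):
`j = 0` drops the first arrow, `j = p+1` drops the last one,
`0 < j < p+1` multiplies `g_{j-1}g_j`. -/
def faceTuple (p : ℕ) (v : Fin (p+1) → G) (j : Fin (p+2)) : Fin p → G :=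
  fun i =>
    if i.1 + 1 < j.1 then v ⟨i.1, by have := i.isLt; omega⟩
    else if i.1 + 1 = j.1 then
      𝒢.mul (v ⟨i.1, by have := i.isLt; omega⟩) (v ⟨i.1 + 1, by have := i.isLt; omega⟩)
    else v ⟨i.1 + 1, by have := i.isLt; omega⟩

/-- The simplicial coboundary operator `δ : C^p(G) → C^{p+1}(G)`. -/
noncomputable def delta (p : ℕ) (f : 𝒢.Cochain p) : 𝒢.Cochain (p+1) :=
  fun z => ∑ j : Fin (p+2), (-1 : ℝ) ^ (j : ℕ) *
    𝒢.extC p f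
      (if j.1 = 0 then 𝒢.src (z.1.2 ⟨0, Nat.succ_pos p⟩) else z.1.1,
       𝒢.faceTuple p z.1.2 j)

/-- `g` is a unit arrow. -/
def IsUnitArrow (g : G) : Prop := ∃ x, g = 𝒢.unit x

/-- A real cochain is normalized if it vanishes whenever one of its arguments is a unit. -/
def IsNormalizedC (p : ℕ) (f : 𝒢.Cochain p) : Prop :=
  ∀ z : 𝒢.APt p, (∃ i : Fin p, 𝒢.IsUnitArrow (z.1.2 i)) → f z = 0

/-- A vector-valued cochain is normalized if it vanishes whenever one of its
arguments is a unit. -/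
def IsNormalizedE (E : M → Type) [∀ x, AddCommGroup (E x)] [∀ x, Module ℝ (E x)]
    (p : ℕ) (ω : 𝒢.ECochain E p) : Prop :=
  ∀ z : 𝒢.APt p, (∃ i : Fin p, 𝒢.IsUnitArrow (z.1.2 i)) → ω z = 0

/-- The anchor of the tail-part of a splitting of a string after its first `p`
arrows: `s(g_p)` (or the anchor itself when `p = 0`). -/
def endAnchor (p : ℕ) (z : M × (Fin p → G)) : M :=
  if hp : 0 < p then 𝒢.src (z.2 ⟨p - 1, by omega⟩) else z.1

/-- The product `f₁ ⋆ f₂` of real cochains. -/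
noncomputable def starC (p q : ℕ) (f₁ : 𝒢.Cochain p) (f₂ : 𝒢.Cochain q) : 𝒢.Cochain (p+q) :=
  fun z =>
    𝒢.extC p f₁ (z.1.1, fun i => z.1.2 ⟨i.1, by have := i.isLt; omega⟩) *
    𝒢.extC q f₂
      (𝒢.endAnchor p (z.1.1, fun i => z.1.2 ⟨i.1, by have := i.isLt; omega⟩),
       fun i => z.1.2 ⟨p + i.1, by have := i.isLt; omega⟩)

/-- The right `C(G)`-module structure `ω ⋆ f` on vector-valued cochains. -/
noncomputable def starE (E : M → Type) [∀ x, AddCommGroup (E x)] [∀ x, Module ℝ (E x)]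
    (p q : ℕ) (ω : 𝒢.ECochain E p) (f : 𝒢.Cochain q) : 𝒢.ECochain E (p+q) :=
  fun z =>
    𝒢.extC q f
      (𝒢.endAnchor p (z.1.1, fun i => z.1.2 ⟨i.1, by have := i.isLt; omega⟩),
       fun i => z.1.2 ⟨p + i.1, by have := i.isLt; omega⟩) •
    𝒢.extE E p ω (z.1.1, fun i => z.1.2 ⟨i.1, by have := i.isLt; omega⟩)

/-- Reindexing of anchored points along an equality of degrees. -/
@[reducible] def recastPt {a b : ℕ} (h : a = b) (z : 𝒢.APt a) : 𝒢.APt b :=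
  ⟨(z.1.1, fun i => z.1.2 (Fin.cast h.symm i)), by subst h; exact z.2⟩

/-- Reindexing of vector-valued cochains along an equality of degrees. -/
@[reducible] def recastE (E : M → Type) {a b : ℕ} (h : a = b) (ω : 𝒢.ECochain E a) : 𝒢.ECochain E b :=
  fun z => ω (𝒢.recastPt h.symm z)

/-- The anchored point of degree `0` at `x : M`. -/
@[reducible] def pt0 (x : M) : 𝒢.APt 0 :=
  ⟨(x, fun i => i.elim0), by exact ⟨fun i h => by omega, fun h => by omega⟩⟩

/-- The anchored point of degree `1` given by a single arrow `g`. -/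
@[reducible] def pt1 (g : G) : 𝒢.APt 1 :=
  ⟨(𝒢.tgt g, fun _ => g), by exact ⟨fun i h => by omega, fun h => rfl⟩⟩

/-- The anchored point of degree `2` given by a composable pair `(g₁, g₂)`. -/
@[reducible] def pt2 (g₁ g₂ : G) (h : 𝒢.src g₁ = 𝒢.tgt g₂) : 𝒢.APt 2 :=
  ⟨(𝒢.tgt g₁, fun i => if i.1 = 0 then g₁ else g₂), by
    refine ⟨fun i hi => ?_, fun h0 => rfl⟩
    have hi0 : i = 0 := by omega
    subst hi0
    simpa using h⟩

end SetGroupoid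
namespace SetGroupoid
variable {G M : Type} (𝒢 : SetGroupoid G M)

/-- A degree-1 operator on `C(G;E)` satisfies the graded Leibniz rule. -/
def IsLeibnizOp (E : M → Type) [∀ x, AddCommGroup (E x)] [∀ x, Module ℝ (E x)]
    (D : ∀ p, 𝒢.ECochain E p → 𝒢.ECochain E (p+1)) : Prop :=
  ∀ (p q : ℕ) (ω : 𝒢.ECochain E p) (f : 𝒢.Cochain q),
    D (p+q) (𝒢.starE E p q ω f) =
      𝒢.recastE E (by omega : (p+1)+q = p+q+1) (𝒢.starE E (p+1) q (D p ω) f) +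
        ((-1 : ℝ) ^ p) • 𝒢.recastE E (by omega : p+(q+1) = p+q+1) (𝒢.starE E p (q+1) ω (𝒢.delta q f))

/-- Finitely many sections of `E` span every fiber. -/
def HasSpanningSections (E : M → Type) [∀ x, AddCommGroup (E x)] [∀ x, Module ℝ (E x)] : Prop :=
  ∃ (n : ℕ) (εs : Fin n → ∀ x, E x),
    ∀ x, Submodule.span ℝ (Set.range fun i => εs i x) = ⊤

end SetGroupoid
namespace SetGroupoid
variable {G M : Type} (𝒢 : SetGroupoid G M)

/-- A quasi-action of `G` on the family `F`: a linear map `F_{s(g)} → F_{t(g)}`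
for every arrow `g`. -/
abbrev QAct (F : M → Type) [∀ x, AddCommGroup (F x)] [∀ x, Module ℝ (F x)] :=
  ∀ g : G, F (𝒢.src g) →ₗ[ℝ] F (𝒢.tgt g)

/-- A quasi-action is unital if `Δ_{1_x} = id` (modulo the canonical identifications). -/
def IsUnitalQ (F : M → Type) [∀ x, AddCommGroup (F x)] [∀ x, Module ℝ (F x)]
    (Δ : 𝒢.QAct F) : Prop :=
  ∀ (x : M) (e : F (𝒢.src (𝒢.unit x))),
    Δ (𝒢.unit x) e = fcst F ((𝒢.src_unit x).trans (𝒢.tgt_unit x).symm) e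

/-- A quasi-action is flat if `Δ_{g₁} Δ_{g₂} = Δ_{g₁ g₂}` on composable pairs. -/
def IsFlatQ (F : M → Type) [∀ x, AddCommGroup (F x)] [∀ x, Module ℝ (F x)]
    (Δ : 𝒢.QAct F) : Prop :=
  ∀ (g₁ g₂ : G) (h : 𝒢.src g₁ = 𝒢.tgt g₂),
    Δ g₁ ∘ₗ lcast F h.symm ∘ₗ Δ g₂ =
      lcast F (𝒢.tgt_mul g₁ g₂ h) ∘ₗ Δ (𝒢.mul g₁ g₂) ∘ₗ lcast F (𝒢.src_mul g₁ g₂ h).symm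

end SetGroupoid
namespace SetGroupoid
variable {G M : Type} (𝒢 : SetGroupoid G M)

/-- The simplicial degree-1 operator on `C(G;F)` associated to a quasi-action:
`(Dω)(g₀,…,g_p) = Δ_{g₀} ω(g₁,…,g_p) + Σ_{i=1}^p (-1)^i ω(g₀,…,g_{i-1}g_i,…,g_p)
 + (-1)^{p+1} ω(g₀,…,g_{p-1})`. -/
noncomputable def simpD (F : M → Type) [∀ x, AddCommGroup (F x)] [∀ x, Module ℝ (F x)]
    (Δ : 𝒢.QAct F) (p : ℕ) (ω : 𝒢.ECochain F p) : 𝒢.ECochain F (p+1) :=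
  fun z =>
    fcst F (z.2.2 (Nat.succ_pos p))
      (Δ (z.1.2 ⟨0, Nat.succ_pos p⟩)
        (𝒢.extE F p ω
          (𝒢.src (z.1.2 ⟨0, Nat.succ_pos p⟩),
           fun i => z.1.2 ⟨i.1 + 1, by have := i.isLt; omega⟩)))
    + ∑ j : Fin (p+1), (-1 : ℝ) ^ (j.1 + 1) •
        𝒢.extE F p ω (z.1.1, 𝒢.faceTuple p z.1.2 j.succ)

end SetGroupoid
namespace SetGroupoid
variable {G M : Type} (𝒢 : SetGroupoid G M)
variable (E C : M → Type)
  [∀ x, AddCommGroup (E x)] [∀ x, Module ℝ (E x)]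
  [∀ x, AddCommGroup (C x)] [∀ x, Module ℝ (C x)]

/-- A family of linear maps `∂ₓ : Cₓ → Eₓ`. -/
abbrev DelMap := ∀ x : M, C x →ₗ[ℝ] E x

/-- A transformation 2-cochain in concrete form: a linear map
`E_{s(g₂)} → C_{t(g₁)}` for every composable pair. -/
abbrev Omega2 := ∀ g₁ g₂ : G, 𝒢.src g₁ = 𝒢.tgt g₂ → (E (𝒢.src g₂) →ₗ[ℝ] C (𝒢.tgt g₁))

/-- A transformation 1-cochain in concrete form: a linear map
`E_{s(g)} → C_{t(g)}` for every arrow. -/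
abbrev Sigma1 := ∀ g : G, E (𝒢.src g) →ₗ[ℝ] C (𝒢.tgt g)

/-- A concrete transformation 2-cochain is normalized. -/
def IsNormalizedOmega (Ω : 𝒢.Omega2 E C) : Prop :=
  ∀ (g₁ g₂ : G) (h : 𝒢.src g₁ = 𝒢.tgt g₂),
    (𝒢.IsUnitArrow g₁ ∨ 𝒢.IsUnitArrow g₂) → Ω g₁ g₂ h = 0

/-- A concrete transformation 1-cochain is normalized. -/
def IsNormalizedSigma (σ : 𝒢.Sigma1 E C) : Prop := ∀ x : M, σ (𝒢.unit x) = 0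

/-- The degree-`p` component `C^p(G;E) ⊕ C^{p+1}(G;C)` of `C(G; E ⊕ C[1])`. -/
abbrev TwoTerm (p : ℕ) := 𝒢.ECochain E p × 𝒢.ECochain C (p+1)

/-- Reindexing of `TwoTerm` along an equality of degrees. -/
@[reducible] def recastTT {a b : ℕ} (h : a = b) (ωα : 𝒢.TwoTerm E C a) : 𝒢.TwoTerm E C b :=
  (𝒢.recastE E h ωα.1, 𝒢.recastE C (by omega : a+1 = b+1) ωα.2)

/-- The componentwise right `C(G)`-module structure on `C(G; E ⊕ C[1])`. -/
noncomputable def starTT (p q : ℕ) (ωα : 𝒢.TwoTerm E C p) (f : 𝒢.Cochain q) :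
    𝒢.TwoTerm E C (p+q) :=
  (𝒢.starE E p q ωα.1 f,
   𝒢.recastE C (by omega : (p+1)+q = (p+q)+1) (𝒢.starE C (p+1) q ωα.2 f))

/-- The operator `∂̂` induced by a family `∂ₓ : Cₓ → Eₓ`. -/
def hatDel (del : DelMap E C) (p : ℕ) (α : 𝒢.ECochain C p) : 𝒢.ECochain E p :=
  fun z => del z.1.1 (α z)

/-- The operator `σ̂ : C^q(G;E) → C^{q+1}(G;C)` induced by a transformation
1-cochain: `(σ̂η)(g₁,…,g_{q+1}) = σ_{g₁}(η(g₂,…,g_{q+1}))`. -/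
noncomputable def hatSigma (σ : 𝒢.Sigma1 E C) (p : ℕ) (ω : 𝒢.ECochain E p) :
    𝒢.ECochain C (p+1) :=
  fun z =>
    fcst C (z.2.2 (Nat.succ_pos p))
      (σ (z.1.2 ⟨0, Nat.succ_pos p⟩)
        (𝒢.extE E p ω
          (𝒢.src (z.1.2 ⟨0, Nat.succ_pos p⟩),
           fun i => z.1.2 ⟨i.1 + 1, by have := i.isLt; omega⟩)))

/-- The operator `Ω̂ : C^p(G;E) → C^{p+2}(G;C)` induced by a transformation
2-cochain: `(Ω̂η)(g₁,…,g_{p+2}) = Ω_{g₁,g₂}(η(g₃,…,g_{p+2}))`. -/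
noncomputable def hatOmega (Ω : 𝒢.Omega2 E C) (p : ℕ) (ω : 𝒢.ECochain E p) :
    𝒢.ECochain C (p+2) :=
  fun z =>
    fcst C (z.2.2 (by omega))
      (Ω (z.1.2 ⟨0, by omega⟩) (z.1.2 ⟨1, by omega⟩) (z.2.1 0 (by omega))
        (𝒢.extE E p ω
          (𝒢.src (z.1.2 ⟨1, by omega⟩),
           fun i => z.1.2 ⟨i.1 + 2, by have := i.isLt; omega⟩)))

/-- The structure equations (i)–(iv) of a 2-term representation up to homotopy,
together with unitality of the quasi-actions and normalization of `Ω`. -/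
def IsRepHtpyTuple (ΔC : 𝒢.QAct C) (ΔE : 𝒢.QAct E) (del : DelMap E C)
    (Ω : 𝒢.Omega2 E C) : Prop :=
  𝒢.IsUnitalQ C ΔC ∧ 𝒢.IsUnitalQ E ΔE ∧ 𝒢.IsNormalizedOmega E C Ω ∧
  (∀ g₁ : G, ΔE g₁ ∘ₗ del (𝒢.src g₁) = del (𝒢.tgt g₁) ∘ₗ ΔC g₁) ∧
  (∀ (g₁ g₂ : G) (h : 𝒢.src g₁ = 𝒢.tgt g₂),
    ΔC g₁ ∘ₗ lcast C h.symm ∘ₗ ΔC g₂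
      - lcast C (𝒢.tgt_mul g₁ g₂ h) ∘ₗ ΔC (𝒢.mul g₁ g₂) ∘ₗ lcast C (𝒢.src_mul g₁ g₂ h).symm
      + Ω g₁ g₂ h ∘ₗ del (𝒢.src g₂) = 0) ∧
  (∀ (g₁ g₂ : G) (h : 𝒢.src g₁ = 𝒢.tgt g₂),
    ΔE g₁ ∘ₗ lcast E h.symm ∘ₗ ΔE g₂
      - lcast E (𝒢.tgt_mul g₁ g₂ h) ∘ₗ ΔE (𝒢.mul g₁ g₂) ∘ₗ lcast E (𝒢.src_mul g₁ g₂ h).symm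
      + del (𝒢.tgt g₁) ∘ₗ Ω g₁ g₂ h = 0) ∧
  (∀ (g₁ g₂ g₃ : G) (h₁ : 𝒢.src g₁ = 𝒢.tgt g₂) (h₂ : 𝒢.src g₂ = 𝒢.tgt g₃),
    ΔC g₁ ∘ₗ lcast C h₁.symm ∘ₗ Ω g₂ g₃ h₂
      - lcast C (𝒢.tgt_mul g₁ g₂ h₁) ∘ₗ Ω (𝒢.mul g₁ g₂) g₃ ((𝒢.src_mul g₁ g₂ h₁).trans h₂)
      + Ω g₁ (𝒢.mul g₂ g₃) (h₁.trans (𝒢.tgt_mul g₂ g₃ h₂).symm)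
          ∘ₗ lcast E (𝒢.src_mul g₂ g₃ h₂).symm
      - Ω g₁ g₂ h₁ ∘ₗ lcast E h₂.symm ∘ₗ ΔE g₃ = 0)

/-- The level `-1` part of the operator `𝒟 = D^E + D^C + ∂̂ + Ω̂` associated to a
4-tuple: it sends `Γ(C) = C^0(G;C)` (total degree `-1`) to total degree `0`. -/
noncomputable def tupleOpNeg (ΔC : 𝒢.QAct C) (del : DelMap E C)
    (α : 𝒢.ECochain C 0) : 𝒢.TwoTerm E C 0 :=
  (𝒢.hatDel E C del 0 α, -(𝒢.simpD C ΔC 0 α))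

/-- The non-negative-degree part of the operator `𝒟 = D^E + D^C + ∂̂ + Ω̂`
associated to a 4-tuple (`D^C` is minus the simplicial operator of `Δ^C`). -/
noncomputable def tupleOpPos (ΔC : 𝒢.QAct C) (ΔE : 𝒢.QAct E) (del : DelMap E C)
    (Ω : 𝒢.Omega2 E C) (p : ℕ) (ωα : 𝒢.TwoTerm E C p) : 𝒢.TwoTerm E C (p+1) :=
  (𝒢.simpD E ΔE p ωα.1 + 𝒢.hatDel E C del (p+1) ωα.2,
   -(𝒢.simpD C ΔC (p+1) ωα.2) + 𝒢.hatOmega E C Ω p ωα.1)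

/-- Normalization of an element of `C(G; E ⊕ C[1])`. -/
def IsNormalizedTT (p : ℕ) (ωα : 𝒢.TwoTerm E C p) : Prop :=
  𝒢.IsNormalizedE E p ωα.1 ∧ 𝒢.IsNormalizedE C (p+1) ωα.2

/-- A representation up to homotopy of `G` on `E ⊕ C[1]`: a degree-1 ℝ-linear
operator on `C(G; E ⊕ C[1])` (given by its level `-1` component `Dneg` on
`C^0(G;C)` and its components `Dpos p` on `C^p(G;E) ⊕ C^{p+1}(G;C)`), satisfying
the Leibniz rule, preserving normalized cochains, and squaring to zero. -/
noncomputable def IsRUTHPair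
    (Dneg : 𝒢.ECochain C 0 → 𝒢.TwoTerm E C 0)
    (Dpos : ∀ p, 𝒢.TwoTerm E C p → 𝒢.TwoTerm E C (p+1)) : Prop :=
  IsLinearMap ℝ Dneg ∧ (∀ p, IsLinearMap ℝ (Dpos p)) ∧
  -- Leibniz rule on the level `-1` component, `f` of degree 0:
  (∀ (f : 𝒢.Cochain 0) (α : 𝒢.ECochain C 0),
    Dneg (𝒢.starE C 0 0 α f) =
      𝒢.starTT E C 0 0 (Dneg α) f +
        (-1 : ℝ) • (((0 : 𝒢.ECochain E 0), 𝒢.starE C 0 1 α (𝒢.delta 0 f)) : 𝒢.TwoTerm E C 0)) ∧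
  -- Leibniz rule on the level `-1` component, `f` of positive degree:
  (∀ (q : ℕ) (f : 𝒢.Cochain (q+1)) (α : 𝒢.ECochain C 0),
    Dpos q ((0 : 𝒢.ECochain E q),
        𝒢.recastE C (by omega : 0+(q+1) = q+1) (𝒢.starE C 0 (q+1) α f)) =
      𝒢.recastTT E C (by omega : 0+(q+1) = q+1) (𝒢.starTT E C 0 (q+1) (Dneg α) f) +
        (-1 : ℝ) • (((0 : 𝒢.ECochain E (q+1)),
          𝒢.recastE C (by omega : 0+(q+2) = q+2) (𝒢.starE C 0 (q+2) α (𝒢.delta (q+1) f))) :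
            𝒢.TwoTerm E C (q+1))) ∧
  -- Leibniz rule in non-negative degrees:
  (∀ (p q : ℕ) (ωα : 𝒢.TwoTerm E C p) (f : 𝒢.Cochain q),
    Dpos (p+q) (𝒢.starTT E C p q ωα f) =
      𝒢.recastTT E C (by omega : (p+1)+q = (p+q)+1) (𝒢.starTT E C (p+1) q (Dpos p ωα) f) +
        ((-1 : ℝ) ^ p) •
          𝒢.recastTT E C (by omega : p+(q+1) = (p+q)+1)
            (𝒢.starTT E C p (q+1) ωα (𝒢.delta q f))) ∧
  -- preservation of normalized cochains:
  (∀ α : 𝒢.ECochain C 0, 𝒢.IsNormalizedE C 0 α → 𝒢.IsNormalizedTT E C 0 (Dneg α)) ∧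
  (∀ p (ωα : 𝒢.TwoTerm E C p), 𝒢.IsNormalizedTT E C p ωα →
    𝒢.IsNormalizedTT E C (p+1) (Dpos p ωα)) ∧
  -- 𝒟 ∘ 𝒟 = 0:
  (∀ α : 𝒢.ECochain C 0, Dpos 0 (Dneg α) = 0) ∧
  (∀ p (ωα : 𝒢.TwoTerm E C p), Dpos (p+1) (Dpos p ωα) = 0)

end SetGroupoid
namespace SetGroupoid
variable {G M : Type} (𝒢 : SetGroupoid G M)
variable (E C : M → Type)
  [∀ x, AddCommGroup (E x)] [∀ x, Module ℝ (E x)]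
  [∀ x, AddCommGroup (C x)] [∀ x, Module ℝ (C x)]

/-- A gauge transformation of `C(G; E ⊕ C[1])`: a degree-preserving right
`C(G)`-module automorphism (given by its level `-1` component `Tneg` on
`C^0(G;C)` and components `Tpos p` on `C^p(G;E) ⊕ C^{p+1}(G;C)`), preserving
normalized cochains and satisfying `μ ∘ T = μ`. -/
noncomputable def IsGaugePair
    (Tneg : 𝒢.ECochain C 0 → 𝒢.ECochain C 0)
    (Tpos : ∀ p, 𝒢.TwoTerm E C p → 𝒢.TwoTerm E C p) : Prop :=
  IsLinearMap ℝ Tneg ∧ (∀ p, IsLinearMap ℝ (Tpos p)) ∧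
  Function.Bijective Tneg ∧ (∀ p, Function.Bijective (Tpos p)) ∧
  -- module-morphism property, level `-1`, `f` of degree 0:
  (∀ (f : 𝒢.Cochain 0) (α : 𝒢.ECochain C 0),
    Tneg (𝒢.starE C 0 0 α f) = 𝒢.starE C 0 0 (Tneg α) f) ∧
  -- module-morphism property, level `-1`, `f` of positive degree:
  (∀ (q : ℕ) (f : 𝒢.Cochain (q+1)) (α : 𝒢.ECochain C 0),
    Tpos q ((0 : 𝒢.ECochain E q),
        𝒢.recastE C (by omega : 0+(q+1) = q+1) (𝒢.starE C 0 (q+1) α f)) =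
      ((0 : 𝒢.ECochain E q),
        𝒢.recastE C (by omega : 0+(q+1) = q+1) (𝒢.starE C 0 (q+1) (Tneg α) f))) ∧
  -- module-morphism property in non-negative degrees:
  (∀ (p q : ℕ) (ωα : 𝒢.TwoTerm E C p) (f : 𝒢.Cochain q),
    Tpos (p+q) (𝒢.starTT E C p q ωα f) = 𝒢.starTT E C p q (Tpos p ωα) f) ∧
  -- preservation of normalized cochains:
  (∀ α : 𝒢.ECochain C 0, 𝒢.IsNormalizedE C 0 α → 𝒢.IsNormalizedE C 0 (Tneg α)) ∧
  (∀ p (ωα : 𝒢.TwoTerm E C p), 𝒢.IsNormalizedTT E C p ωα →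
    𝒢.IsNormalizedTT E C p (Tpos p ωα)) ∧
  -- `μ ∘ T = μ`:
  (∀ α : 𝒢.ECochain C 0, Tneg α = α) ∧
  (∀ ωα : 𝒢.TwoTerm E C 0, (Tpos 0 ωα).1 = ωα.1)

/-- The operator `1 + σ̂` on `C(G; E ⊕ C[1])` (its level `-1` component is the
identity). -/
noncomputable def onePlusSigma (σ : 𝒢.Sigma1 E C) (p : ℕ) (ωα : 𝒢.TwoTerm E C p) :
    𝒢.TwoTerm E C p :=
  (ωα.1, ωα.2 + 𝒢.hatSigma E C σ p ωα.1)

/-- The operator `1 - σ̂` on `C(G; E ⊕ C[1])` (its level `-1` component is the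
identity). -/
noncomputable def oneMinusSigma (σ : 𝒢.Sigma1 E C) (p : ℕ) (ωα : 𝒢.TwoTerm E C p) :
    𝒢.TwoTerm E C p :=
  (ωα.1, ωα.2 - 𝒢.hatSigma E C σ p ωα.1)

end SetGroupoid
namespace SetGroupoid
variable {G M : Type} (𝒢 : SetGroupoid G M)
variable (E C : M → Type)
  [∀ x, AddCommGroup (E x)] [∀ x, Module ℝ (E x)]
  [∀ x, AddCommGroup (C x)] [∀ x, Module ℝ (C x)]

/-- The differential `D : C¹(G;E→C) → C²(G;E→C)` associated to quasi-actions
`Δ^C`, `Δ^E`: `(Dσ)(g₀,g₁) = Δ^C_{g₀}∘σ(g₁) - σ(g₀g₁) + σ(g₀)∘Δ^E_{g₁}`. -/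
def transD1 (ΔC : 𝒢.QAct C) (ΔE : 𝒢.QAct E) (σ : 𝒢.Sigma1 E C) :
    ∀ (g₀ g₁ : G), 𝒢.src g₀ = 𝒢.tgt g₁ → (E (𝒢.src g₁) →ₗ[ℝ] C (𝒢.tgt g₀)) :=
  fun g₀ g₁ h =>
    ΔC g₀ ∘ₗ lcast C h.symm ∘ₗ σ g₁
    - lcast C (𝒢.tgt_mul g₀ g₁ h) ∘ₗ σ (𝒢.mul g₀ g₁) ∘ₗ lcast E (𝒢.src_mul g₀ g₁ h).symm
    + σ g₀ ∘ₗ lcast E h.symm ∘ₗ ΔE g₁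

/-- The differential `D : C²(G;E→C) → C³(G;E→C)` associated to quasi-actions
`Δ^C`, `Δ^E`: `(DΩ)(g₀,g₁,g₂) = Δ^C_{g₀}∘Ω(g₁,g₂) - Ω(g₀g₁,g₂) + Ω(g₀,g₁g₂)
 - Ω(g₀,g₁)∘Δ^E_{g₂}`. -/
def transD2 (ΔC : 𝒢.QAct C) (ΔE : 𝒢.QAct E) (Ω : 𝒢.Omega2 E C) :
    ∀ (g₀ g₁ g₂ : G), 𝒢.src g₀ = 𝒢.tgt g₁ → 𝒢.src g₁ = 𝒢.tgt g₂ →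
      (E (𝒢.src g₂) →ₗ[ℝ] C (𝒢.tgt g₀)) :=
  fun g₀ g₁ g₂ h₀ h₁ =>
    ΔC g₀ ∘ₗ lcast C h₀.symm ∘ₗ Ω g₁ g₂ h₁
    - lcast C (𝒢.tgt_mul g₀ g₁ h₀) ∘ₗ Ω (𝒢.mul g₀ g₁) g₂ ((𝒢.src_mul g₀ g₁ h₀).trans h₁)
    + Ω g₀ (𝒢.mul g₁ g₂) (h₀.trans (𝒢.tgt_mul g₁ g₂ h₁).symm)
        ∘ₗ lcast E (𝒢.src_mul g₁ g₂ h₁).symm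
    - Ω g₀ g₁ h₀ ∘ₗ lcast E h₁.symm ∘ₗ ΔE g₂

end SetGroupoid
namespace SetGroupoid

section CastLemmas
variable {α : Type} (F : α → Type)

theorem fcst_refl {a : α} (h : a = a) (v : F a) : fcst F h v = v := rfl

theorem fcst_trans {a b c : α} (h₁ : a = b) (h₂ : b = c) (v : F a) :
    fcst F h₂ (fcst F h₁ v) = fcst F (h₁.trans h₂) v := by cases h₁; cases h₂; rfl

variable [∀ a, AddCommGroup (F a)] [∀ a, Module ℝ (F a)]

theorem fcst_add {a b : α} (h : a = b) (u v : F a) :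
    fcst F h (u + v) = fcst F h u + fcst F h v := by cases h; rfl

theorem fcst_sub {a b : α} (h : a = b) (u v : F a) :
    fcst F h (u - v) = fcst F h u - fcst F h v := by cases h; rfl

theorem fcst_neg {a b : α} (h : a = b) (u : F a) :
    fcst F h (-u) = -(fcst F h u) := by cases h; rfl

theorem fcst_zero {a b : α} (h : a = b) : fcst F h (0 : F a) = 0 := by cases h; rfl

theorem fcst_smul {a b : α} (h : a = b) (r : ℝ) (u : F a) :
    fcst F h (r • u) = r • fcst F h u := by cases h; rfl

theorem lcast_apply {a b : α} (h : a = b) (v : F a) : lcast F h v = fcst F h v := rfl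

end CastLemmas

variable {G M : Type} (𝒢 : SetGroupoid G M)

theorem anchored_zero (x : M) (v : Fin 0 → G) : 𝒢.IsAnchored 0 (x, v) :=
  ⟨fun i h => by omega, fun h => by omega⟩

section ExtLemmas
variable (F : M → Type) [∀ x, AddCommGroup (F x)] [∀ x, Module ℝ (F x)]

theorem extE_pos (p : ℕ) (ω : 𝒢.ECochain F p) (w : M × (Fin p → G))
    (h : 𝒢.IsAnchored p w) : 𝒢.extE F p ω w = ω ⟨w, h⟩ := dif_pos h

theorem extE_eq_zero (p : ℕ) (ω : 𝒢.ECochain F p) (hω : ∀ z, ω z = 0)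
    (w : M × (Fin p → G)) : 𝒢.extE F p ω w = 0 := by
  unfold extE; split <;> simp [hω]

theorem extE_add (p : ℕ) (ω η : 𝒢.ECochain F p) (w : M × (Fin p → G)) :
    𝒢.extE F p (ω + η) w = 𝒢.extE F p ω w + 𝒢.extE F p η w := by
  unfold extE; split <;> simp

end ExtLemmas

end SetGroupoid

namespace SetGroupoid

set_option linter.unusedSectionVars false

variable {G M : Type} (𝒢 : SetGroupoid G M)

theorem anchored_shift (p : ℕ) (z : 𝒢.APt (p+1)) :
    𝒢.IsAnchored p
      (𝒢.src (z.1.2 ⟨0, Nat.succ_pos p⟩),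
       fun i : Fin p => z.1.2 ⟨i.1+1, by have := i.isLt; omega⟩) := by
  refine ⟨fun i h => ?_, fun h => ?_⟩
  · exact z.2.1 (i+1) (by omega)
  · exact (z.2.1 0 (by omega)).symm

theorem comp_face (p : ℕ) (v : Fin (p+1) → G) (hc : 𝒢.IsComposable (p+1) v)
    (j : Fin (p+2)) : 𝒢.IsComposable p (𝒢.faceTuple p v j) := by
  intro i h
  unfold faceTuple
  simp only [Fin.val_mk]
  split_ifs with h1 h2 h3 h4 h5 h6 h7 h8 <;>
    first
      | exact hc i (by omega)
      | exact hc (i+1) (by omega)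
      | exact (hc i (by omega)).trans (𝒢.tgt_mul _ _ (hc (i+1) (by omega))).symm
      | exact (𝒢.src_mul _ _ (hc i (by omega))).trans (hc (i+1) (by omega))
      | (exfalso; omega)

theorem anchored_face (p : ℕ) (z : 𝒢.APt (p+1)) (j : Fin (p+2)) (hj : 0 < j.1) :
    𝒢.IsAnchored p (z.1.1, 𝒢.faceTuple p z.1.2 j) := by
  refine ⟨𝒢.comp_face p z.1.2 z.2.1 j, fun h => ?_⟩
  show 𝒢.tgt (𝒢.faceTuple p z.1.2 j ⟨0, h⟩) = z.1.1
  unfold faceTuple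
  simp only [Fin.val_mk]
  split_ifs with h1 h2
  · exact z.2.2 (Nat.succ_pos p)
  · exact (𝒢.tgt_mul _ _ (z.2.1 0 (by omega))).trans (z.2.2 (Nat.succ_pos p))
  · exfalso; omega

section PointwiseLemmas
variable (F : M → Type) [∀ x, AddCommGroup (F x)] [∀ x, Module ℝ (F x)]

theorem simpD_apply_add (Δ : 𝒢.QAct F) (p : ℕ) (ω η : 𝒢.ECochain F p)
    (z : 𝒢.APt (p+1)) :
    𝒢.simpD F Δ p (ω + η) z = 𝒢.simpD F Δ p ω z + 𝒢.simpD F Δ p η z := by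
  unfold simpD
  simp only [extE_add, map_add, fcst_add, smul_add, Finset.sum_add_distrib]
  abel

end PointwiseLemmas

section PointwiseLemmas2
variable (E C : M → Type)
  [∀ x, AddCommGroup (E x)] [∀ x, Module ℝ (E x)]
  [∀ x, AddCommGroup (C x)] [∀ x, Module ℝ (C x)]

theorem hatSigma_apply_add (σ : 𝒢.Sigma1 E C) (p : ℕ) (ω η : 𝒢.ECochain E p)
    (z : 𝒢.APt (p+1)) :
    𝒢.hatSigma E C σ p (ω + η) z = 𝒢.hatSigma E C σ p ω z + 𝒢.hatSigma E C σ p η z := by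
  unfold hatSigma
  simp only [extE_add, map_add, fcst_add]

theorem hatSigma_apply_zero (σ : 𝒢.Sigma1 E C) (p : ℕ) (ω : 𝒢.ECochain E p)
    (hω : ∀ z, ω z = 0) (z : 𝒢.APt (p+1)) :
    𝒢.hatSigma E C σ p ω z = 0 := by
  unfold hatSigma
  rw [𝒢.extE_eq_zero E p ω hω, map_zero, fcst_zero]

theorem hatOmega_apply_sub (Ω₁ Ω₂ : 𝒢.Omega2 E C) (p : ℕ) (ω : 𝒢.ECochain E p)
    (z : 𝒢.APt (p+2)) :
    𝒢.hatOmega E C (fun g₁ g₂ h => Ω₁ g₁ g₂ h - Ω₂ g₁ g₂ h) p ω z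
      = 𝒢.hatOmega E C Ω₁ p ω z - 𝒢.hatOmega E C Ω₂ p ω z := by
  unfold hatOmega
  rw [LinearMap.sub_apply, fcst_sub]

end PointwiseLemmas2

end SetGroupoid

namespace SetGroupoid

set_option linter.unusedSectionVars false
set_option maxHeartbeats 1000000

variable {G M : Type} (𝒢 : SetGroupoid G M)

section MoreCast
variable {α : Type} (F : α → Type) [∀ a, AddCommGroup (F a)] [∀ a, Module ℝ (F a)]

theorem fcst_sum {ι : Type} (s : Finset ι) {a b : α} (h : a = b) (f : ι → F a) :
    fcst F h (∑ i ∈ s, f i) = ∑ i ∈ s, fcst F h (f i) := by cases h; rfl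

end MoreCast

section Main
variable (E C : M → Type)
  [∀ x, AddCommGroup (E x)] [∀ x, Module ℝ (E x)]
  [∀ x, AddCommGroup (C x)] [∀ x, Module ℝ (C x)]

theorem extE_hatSigma (σ : 𝒢.Sigma1 E C) (p : ℕ) (ω : 𝒢.ECochain E p)
    (x : M) (t : Fin (p+1) → G) (hw : 𝒢.IsAnchored (p+1) (x, t)) :
    𝒢.extE C (p+1) (𝒢.hatSigma E C σ p ω) (x, t)
      = fcst C (hw.2 (Nat.succ_pos p)) (σ (t ⟨0, Nat.succ_pos p⟩)
          (𝒢.extE E p ω (𝒢.src (t ⟨0, Nat.succ_pos p⟩),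
            fun i : Fin p => t ⟨i.1+1, Nat.add_lt_add_right i.isLt 1⟩))) := by
  rw [𝒢.extE_pos C (p+1) _ _ hw]; rfl

theorem sigma_extE_congr (σ : 𝒢.Sigma1 E C) (p : ℕ) (ω : 𝒢.ECochain E p) {g g' : G}
    (hg : g = g') {x : M} (hx : x = 𝒢.src g') {y : M} (hy : 𝒢.tgt g = y)
    (hy' : 𝒢.tgt g' = y) (t : Fin p → G) :
    fcst C hy (σ g (𝒢.extE E p ω (𝒢.src g, t)))
      = fcst C hy' (σ g' (fcst E hx (𝒢.extE E p ω (x, t)))) := by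
  subst hg; subst hx; subst hy; rfl

theorem omega_congr (Ω : 𝒢.Omega2 E C) {a a' b b' : G} (ha : a = a') (hb : b = b')
    (hc : 𝒢.src a = 𝒢.tgt b) (hc' : 𝒢.src a' = 𝒢.tgt b') {x : M}
    (hx : x = 𝒢.src b) (hx' : x = 𝒢.src b')
    {y : M} (hy : 𝒢.tgt a = y) (hy' : 𝒢.tgt a' = y) (e : E x) :
    fcst C hy (Ω a b hc (fcst E hx e)) = fcst C hy' (Ω a' b' hc' (fcst E hx' e)) := by
  subst ha; subst hb; subst hx; subst hy; rfl

theorem hatSigma_face1_eq (ΔC : 𝒢.QAct C) (σ : 𝒢.Sigma1 E C) (p : ℕ)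
    (ω : 𝒢.ECochain E p) (z : 𝒢.APt (p+2)) :
    𝒢.extE C (p+1) (𝒢.hatSigma E C σ p ω) (z.1.1, 𝒢.faceTuple (p+1) z.1.2 (Fin.succ (0 : Fin (p+1+1))))
      = (fcst C ((𝒢.tgt_mul (z.1.2 ⟨0, Nat.succ_pos (p+1)⟩) (z.1.2 ⟨0+1, Nat.succ_lt_succ (Nat.succ_pos p)⟩) (z.2.1 0 (Nat.succ_lt_succ (Nat.succ_pos p)))).trans (z.2.2 (Nat.succ_pos (p+1)))) (σ (𝒢.mul (z.1.2 ⟨0, Nat.succ_pos (p+1)⟩) (z.1.2 ⟨0+1, Nat.succ_lt_succ (Nat.succ_pos p)⟩)) (fcst E ((𝒢.src_mul (z.1.2 ⟨0, Nat.succ_pos (p+1)⟩) (z.1.2 ⟨0+1, Nat.succ_lt_succ (Nat.succ_pos p)⟩) (z.2.1 0 (Nat.succ_lt_succ (Nat.succ_pos p)))).symm) (𝒢.extE E p ω (𝒢.src (z.1.2 ⟨0+1, Nat.succ_lt_succ (Nat.succ_pos p)⟩), fun i : Fin p => z.1.2 ⟨i.1+1+1, Nat.add_lt_add_right (Nat.add_lt_add_right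 i.isLt 1) 1⟩))))) := by
  rw [𝒢.extE_hatSigma E C σ p ω z.1.1
    (𝒢.faceTuple (p+1) z.1.2 (Fin.succ (0 : Fin (p+1+1))))
    (𝒢.anchored_face (p+1) z (Fin.succ (0 : Fin (p+1+1))) (Nat.succ_pos _))]
  rw [show (fun i : Fin p => 𝒢.faceTuple (p+1) z.1.2 (Fin.succ (0 : Fin (p+1+1)))
        ⟨i.1+1, Nat.add_lt_add_right i.isLt 1⟩)
      = (fun i : Fin p => z.1.2 ⟨i.1+1+1,
          Nat.add_lt_add_right (Nat.add_lt_add_right i.isLt 1) 1⟩) from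
    funext (fun i => by
      unfold faceTuple
      simp only [Fin.val_succ, Fin.val_zero, Fin.val_mk]
      split_ifs <;> first | rfl | (exfalso; omega))]
  have hh : 𝒢.faceTuple (p+1) z.1.2 (Fin.succ (0 : Fin (p+1+1))) ⟨0, Nat.succ_pos p⟩
      = 𝒢.mul (z.1.2 ⟨0, Nat.succ_pos (p+1)⟩) (z.1.2 ⟨0+1, Nat.succ_lt_succ (Nat.succ_pos p)⟩) := by
    unfold faceTuple
    simp only [Fin.val_succ, Fin.val_zero, Fin.val_mk]
    split_ifs <;> first | rfl | (exfalso; omega)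
  exact 𝒢.sigma_extE_congr E C σ p ω hh ((𝒢.src_mul (z.1.2 ⟨0, Nat.succ_pos (p+1)⟩) (z.1.2 ⟨0+1, Nat.succ_lt_succ (Nat.succ_pos p)⟩) (z.2.1 0 (Nat.succ_lt_succ (Nat.succ_pos p)))).symm) _
    ((𝒢.tgt_mul (z.1.2 ⟨0, Nat.succ_pos (p+1)⟩) (z.1.2 ⟨0+1, Nat.succ_lt_succ (Nat.succ_pos p)⟩) (z.2.1 0 (Nat.succ_lt_succ (Nat.succ_pos p)))).trans (z.2.2 (Nat.succ_pos (p+1)))) _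

theorem hatSigma_face_eq (σ : 𝒢.Sigma1 E C) (p : ℕ)
    (ω : 𝒢.ECochain E p) (z : 𝒢.APt (p+2)) (k : Fin (p+1)) :
    𝒢.extE C (p+1) (𝒢.hatSigma E C σ p ω) (z.1.1, 𝒢.faceTuple (p+1) z.1.2 (Fin.succ (Fin.succ k)))
      = (fcst C (z.2.2 (Nat.succ_pos (p+1))) (σ (z.1.2 ⟨0, Nat.succ_pos (p+1)⟩) (𝒢.extE E p ω (𝒢.src (z.1.2 ⟨0, Nat.succ_pos (p+1)⟩), 𝒢.faceTuple p (fun i : Fin (p+1) => z.1.2 ⟨i.1+1, Nat.add_lt_add_right i.isLt 1⟩) k.succ)))) := by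
  rw [𝒢.extE_hatSigma E C σ p ω z.1.1
    (𝒢.faceTuple (p+1) z.1.2 (Fin.succ (Fin.succ k)))
    (𝒢.anchored_face (p+1) z (Fin.succ (Fin.succ k)) (Nat.succ_pos _))]
  rw [show (fun i : Fin p => 𝒢.faceTuple (p+1) z.1.2 (Fin.succ (Fin.succ k))
        ⟨i.1+1, Nat.add_lt_add_right i.isLt 1⟩)
      = 𝒢.faceTuple p (fun i : Fin (p+1) => z.1.2 ⟨i.1+1, Nat.add_lt_add_right i.isLt 1⟩) k.succ from
    funext (fun i => by
      unfold faceTuple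
      simp only [Fin.val_succ, Fin.val_mk]
      split_ifs <;> first | rfl | (exfalso; omega))]
  have hh : 𝒢.faceTuple (p+1) z.1.2 (Fin.succ (Fin.succ k)) ⟨0, Nat.succ_pos p⟩
      = (z.1.2 ⟨0, Nat.succ_pos (p+1)⟩) := by
    unfold faceTuple
    simp only [Fin.val_succ, Fin.val_mk]
    split_ifs <;> first | rfl | (exfalso; omega)
  exact 𝒢.sigma_extE_congr E C σ p ω hh rfl _ (z.2.2 (Nat.succ_pos (p+1))) _

theorem simpD_hatSigma_eq (ΔC : 𝒢.QAct C) (σ : 𝒢.Sigma1 E C) (p : ℕ)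
    (ω : 𝒢.ECochain E p) (z : 𝒢.APt (p+2)) :
    𝒢.simpD C ΔC (p+1) (𝒢.hatSigma E C σ p ω) z = (fcst C (z.2.2 (Nat.succ_pos (p+1))) (ΔC (z.1.2 ⟨0, Nat.succ_pos (p+1)⟩) (fcst C ((z.2.1 0 (Nat.succ_lt_succ (Nat.succ_pos p))).symm) (σ (z.1.2 ⟨0+1, Nat.succ_lt_succ (Nat.succ_pos p)⟩) (𝒢.extE E p ω (𝒢.src (z.1.2 ⟨0+1, Nat.succ_lt_succ (Nat.succ_pos p)⟩), fun i : Fin p => z.1.2 ⟨i.1+1+1, Nat.add_lt_add_right (Nat.add_lt_add_right i.isLt 1) 1⟩)))))) - (fcst C ((𝒢.tgt_mul (z.1.2 ⟨0, Nat.succ_pos (p+1)⟩) (z.1.2 ⟨0+1, Nat.succ_lt_succ (Nat.succ_pos p)⟩) (z.2.1 0 (Nat.succ_lt_succ (Nat.succ_pos p)))).trans (z.2.2 (Nat.succ_pos (p+1)))) (σ (𝒢.mul (z.1.2 ⟨0, Nat.succ_pos (p+1)⟩) (z.1.2 ⟨0+1, Nat.succ_lt_succ (Nat.succ_pos p)⟩))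 (fcst E ((𝒢.src_mul (z.1.2 ⟨0, Nat.succ_pos (p+1)⟩) (z.1.2 ⟨0+1, Nat.succ_lt_succ (Nat.succ_pos p)⟩) (z.2.1 0 (Nat.succ_lt_succ (Nat.succ_pos p)))).symm) (𝒢.extE E p ω (𝒢.src (z.1.2 ⟨0+1, Nat.succ_lt_succ (Nat.succ_pos p)⟩), fun i : Fin p => z.1.2 ⟨i.1+1+1, Nat.add_lt_add_right (Nat.add_lt_add_right i.isLt 1) 1⟩))))) - (∑ k : Fin (p+1), (-1 : ℝ) ^ (k.1 + 1) • (fcst C (z.2.2 (Nat.succ_pos (p+1))) (σ (z.1.2 ⟨0, Nat.succ_pos (p+1)⟩) (𝒢.extE E p ω (𝒢.src (z.1.2 ⟨0, Nat.succ_pos (p+1)⟩), 𝒢.faceTuple p (fun i : Fin (p+1) => z.1.2 ⟨i.1+1, Nat.add_lt_add_right i.isLt 1⟩) k.succ))))) := by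
  have h2 : (∑ j : Fin (p+1+1), (-1 : ℝ) ^ (j.1 + 1) • 𝒢.extE C (p+1) (𝒢.hatSigma E C σ p ω) (z.1.1, 𝒢.faceTuple (p+1) z.1.2 j.succ)) = -(fcst C ((𝒢.tgt_mul (z.1.2 ⟨0, Nat.succ_pos (p+1)⟩) (z.1.2 ⟨0+1, Nat.succ_lt_succ (Nat.succ_pos p)⟩) (z.2.1 0 (Nat.succ_lt_succ (Nat.succ_pos p)))).trans (z.2.2 (Nat.succ_pos (p+1)))) (σ (𝒢.mul (z.1.2 ⟨0, Nat.succ_pos (p+1)⟩) (z.1.2 ⟨0+1, Nat.succ_lt_succ (Nat.succ_pos p)⟩)) (fcst E ((𝒢.src_mul (z.1.2 ⟨0, Nat.succ_pos (p+1)⟩) (z.1.2 ⟨0+1, Nat.succ_lt_succ (Nat.succ_pos p)⟩) (z.2.1 0 (Nat.succ_lt_succ (Nat.succ_pos p)))).symm) (𝒢.extE E p ω (𝒢.src (z.1.2 ⟨0+1, Nat.succ_lt_succ (Nat.succ_pos p)⟩), fun i : Fin p => z.1.2 ⟨i.1+1+1, Nat.add_lt_add_right (Nat.add_lt_add_right i.isLt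 1) 1⟩))))) - (∑ k : Fin (p+1), (-1 : ℝ) ^ (k.1 + 1) • (fcst C (z.2.2 (Nat.succ_pos (p+1))) (σ (z.1.2 ⟨0, Nat.succ_pos (p+1)⟩) (𝒢.extE E p ω (𝒢.src (z.1.2 ⟨0, Nat.succ_pos (p+1)⟩), 𝒢.faceTuple p (fun i : Fin (p+1) => z.1.2 ⟨i.1+1, Nat.add_lt_add_right i.isLt 1⟩) k.succ))))) := by
    have hA : (-1 : ℝ) ^ ((0 : Fin (p+1+1)).1 + 1) • 𝒢.extE C (p+1) (𝒢.hatSigma E C σ p ω) (z.1.1, 𝒢.faceTuple (p+1) z.1.2 (Fin.succ (0 : Fin (p+1+1))))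
        = -(fcst C ((𝒢.tgt_mul (z.1.2 ⟨0, Nat.succ_pos (p+1)⟩) (z.1.2 ⟨0+1, Nat.succ_lt_succ (Nat.succ_pos p)⟩) (z.2.1 0 (Nat.succ_lt_succ (Nat.succ_pos p)))).trans (z.2.2 (Nat.succ_pos (p+1)))) (σ (𝒢.mul (z.1.2 ⟨0, Nat.succ_pos (p+1)⟩) (z.1.2 ⟨0+1, Nat.succ_lt_succ (Nat.succ_pos p)⟩)) (fcst E ((𝒢.src_mul (z.1.2 ⟨0, Nat.succ_pos (p+1)⟩) (z.1.2 ⟨0+1, Nat.succ_lt_succ (Nat.succ_pos p)⟩) (z.2.1 0 (Nat.succ_lt_succ (Nat.succ_pos p)))).symm) (𝒢.extE E p ω (𝒢.src (z.1.2 ⟨0+1, Nat.succ_lt_succ (Nat.succ_pos p)⟩), fun i : Fin p => z.1.2 ⟨i.1+1+1, Nat.add_lt_add_right (Nat.add_lt_add_right i.isLt 1) 1⟩))))) := by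
      rw [𝒢.hatSigma_face1_eq E C ΔC σ p ω z]
      rw [show ((0 : Fin (p+1+1)).1 + 1) = 1 from by simp, pow_one, neg_one_smul]
    have hB : ∀ k : Fin (p+1),
        (-1 : ℝ) ^ ((Fin.succ k).1 + 1) • 𝒢.extE C (p+1) (𝒢.hatSigma E C σ p ω) (z.1.1, 𝒢.faceTuple (p+1) z.1.2 (Fin.succ (Fin.succ k)))
          = -((-1 : ℝ) ^ (k.1 + 1) • (fcst C (z.2.2 (Nat.succ_pos (p+1))) (σ (z.1.2 ⟨0, Nat.succ_pos (p+1)⟩) (𝒢.extE E p ω (𝒢.src (z.1.2 ⟨0, Nat.succ_pos (p+1)⟩), 𝒢.faceTuple p (fun i : Fin (p+1) => z.1.2 ⟨i.1+1, Nat.add_lt_add_right i.isLt 1⟩) k.succ))))) := by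
      intro k
      rw [𝒢.hatSigma_face_eq E C σ p ω z k]
      rw [show ((-1 : ℝ) ^ ((Fin.succ k).1 + 1)) = -((-1 : ℝ) ^ (k.1 + 1)) from by
        rw [Fin.val_succ]; ring, neg_smul]
    calc (∑ j : Fin (p+1+1), (-1 : ℝ) ^ (j.1 + 1) • 𝒢.extE C (p+1) (𝒢.hatSigma E C σ p ω) (z.1.1, 𝒢.faceTuple (p+1) z.1.2 j.succ))
        = (-1 : ℝ) ^ ((0 : Fin (p+1+1)).1 + 1) • 𝒢.extE C (p+1) (𝒢.hatSigma E C σ p ω) (z.1.1, 𝒢.faceTuple (p+1) z.1.2 (Fin.succ (0 : Fin (p+1+1))))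
          + ∑ k : Fin (p+1), (-1 : ℝ) ^ ((Fin.succ k).1 + 1) • 𝒢.extE C (p+1) (𝒢.hatSigma E C σ p ω) (z.1.1, 𝒢.faceTuple (p+1) z.1.2 (Fin.succ (Fin.succ k))) :=
          Fin.sum_univ_succ _
      _ = -(fcst C ((𝒢.tgt_mul (z.1.2 ⟨0, Nat.succ_pos (p+1)⟩) (z.1.2 ⟨0+1, Nat.succ_lt_succ (Nat.succ_pos p)⟩) (z.2.1 0 (Nat.succ_lt_succ (Nat.succ_pos p)))).trans (z.2.2 (Nat.succ_pos (p+1)))) (σ (𝒢.mul (z.1.2 ⟨0, Nat.succ_pos (p+1)⟩) (z.1.2 ⟨0+1, Nat.succ_lt_succ (Nat.succ_pos p)⟩)) (fcst E ((𝒢.src_mul (z.1.2 ⟨0, Nat.succ_pos (p+1)⟩) (z.1.2 ⟨0+1, Nat.succ_lt_succ (Nat.succ_pos p)⟩) (z.2.1 0 (Nat.succ_lt_succ (Nat.succ_pos p)))).symm) (𝒢.extE E p ω (𝒢.src (z.1.2 ⟨0+1, Nat.succ_lt_succ (Nat.succ_pos p)⟩), fun i : Fin p => z.1.2 ⟨i.1+1+1,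 Nat.add_lt_add_right (Nat.add_lt_add_right i.isLt 1) 1⟩))))) + ∑ k : Fin (p+1), -((-1 : ℝ) ^ (k.1 + 1) • (fcst C (z.2.2 (Nat.succ_pos (p+1))) (σ (z.1.2 ⟨0, Nat.succ_pos (p+1)⟩) (𝒢.extE E p ω (𝒢.src (z.1.2 ⟨0, Nat.succ_pos (p+1)⟩), 𝒢.faceTuple p (fun i : Fin (p+1) => z.1.2 ⟨i.1+1, Nat.add_lt_add_right i.isLt 1⟩) k.succ))))) :=
          congrArg₂ (· + ·) hA (Finset.sum_congr rfl (fun k _ => hB k))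
      _ = -(fcst C ((𝒢.tgt_mul (z.1.2 ⟨0, Nat.succ_pos (p+1)⟩) (z.1.2 ⟨0+1, Nat.succ_lt_succ (Nat.succ_pos p)⟩) (z.2.1 0 (Nat.succ_lt_succ (Nat.succ_pos p)))).trans (z.2.2 (Nat.succ_pos (p+1)))) (σ (𝒢.mul (z.1.2 ⟨0, Nat.succ_pos (p+1)⟩) (z.1.2 ⟨0+1, Nat.succ_lt_succ (Nat.succ_pos p)⟩)) (fcst E ((𝒢.src_mul (z.1.2 ⟨0, Nat.succ_pos (p+1)⟩) (z.1.2 ⟨0+1, Nat.succ_lt_succ (Nat.succ_pos p)⟩) (z.2.1 0 (Nat.succ_lt_succ (Nat.succ_pos p)))).symm) (𝒢.extE E p ω (𝒢.src (z.1.2 ⟨0+1, Nat.succ_lt_succ (Nat.succ_pos p)⟩), fun i : Fin p => z.1.2 ⟨i.1+1+1, Nat.add_lt_add_right (Nat.add_lt_add_right i.isLt 1) 1⟩))))) - (∑ k : Fin (p+1), (-1 : ℝ) ^ (k.1 + 1) • (fcst C (z.2.2 (Nat.succ_pos (p+1))) (σ (z.1.2 ⟨0, Nat.succ_pos (p+1)⟩)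 (𝒢.extE E p ω (𝒢.src (z.1.2 ⟨0, Nat.succ_pos (p+1)⟩), 𝒢.faceTuple p (fun i : Fin (p+1) => z.1.2 ⟨i.1+1, Nat.add_lt_add_right i.isLt 1⟩) k.succ))))) := by
          rw [Finset.sum_neg_distrib]; exact (sub_eq_add_neg _ _).symm
  calc 𝒢.simpD C ΔC (p+1) (𝒢.hatSigma E C σ p ω) z
      = (fcst C (z.2.2 (Nat.succ_pos (p+1))) (ΔC (z.1.2 ⟨0, Nat.succ_pos (p+1)⟩) (fcst C ((z.2.1 0 (Nat.succ_lt_succ (Nat.succ_pos p))).symm) (σ (z.1.2 ⟨0+1, Nat.succ_lt_succ (Nat.succ_pos p)⟩) (𝒢.extE E p ω (𝒢.src (z.1.2 ⟨0+1, Nat.succ_lt_succ (Nat.succ_pos p)⟩), fun i : Fin p => z.1.2 ⟨i.1+1+1, Nat.add_lt_add_right (Nat.add_lt_add_right i.isLt 1) 1⟩)))))) + (∑ j : Fin (p+1+1), (-1 : ℝ) ^ (j.1 + 1) • 𝒢.extE C (p+1) (𝒢.hatSigma E C σ p ω) (z.1.1, 𝒢.faceTuple (p+1) z.1.2 j.succ))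 := by
        unfold simpD
        congr 1
        rw [𝒢.extE_pos C (p+1) _ _ (𝒢.anchored_shift (p+1) z)]
        rfl
    _ = (fcst C (z.2.2 (Nat.succ_pos (p+1))) (ΔC (z.1.2 ⟨0, Nat.succ_pos (p+1)⟩) (fcst C ((z.2.1 0 (Nat.succ_lt_succ (Nat.succ_pos p))).symm) (σ (z.1.2 ⟨0+1, Nat.succ_lt_succ (Nat.succ_pos p)⟩) (𝒢.extE E p ω (𝒢.src (z.1.2 ⟨0+1, Nat.succ_lt_succ (Nat.succ_pos p)⟩), fun i : Fin p => z.1.2 ⟨i.1+1+1, Nat.add_lt_add_right (Nat.add_lt_add_right i.isLt 1) 1⟩)))))) + (-(fcst C ((𝒢.tgt_mul (z.1.2 ⟨0, Nat.succ_pos (p+1)⟩) (z.1.2 ⟨0+1, Nat.succ_lt_succ (Nat.succ_pos p)⟩) (z.2.1 0 (Nat.succ_lt_succ (Nat.succ_pos p)))).trans (z.2.2 (Nat.succ_pos (p+1)))) (σ (𝒢.mul (z.1.2 ⟨0, Nat.succ_pos (p+1)⟩) (z.1.2 ⟨0+1, Nat.succ_lt_succ (Nat.succ_pos p)⟩)) (fcst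 E ((𝒢.src_mul (z.1.2 ⟨0, Nat.succ_pos (p+1)⟩) (z.1.2 ⟨0+1, Nat.succ_lt_succ (Nat.succ_pos p)⟩) (z.2.1 0 (Nat.succ_lt_succ (Nat.succ_pos p)))).symm) (𝒢.extE E p ω (𝒢.src (z.1.2 ⟨0+1, Nat.succ_lt_succ (Nat.succ_pos p)⟩), fun i : Fin p => z.1.2 ⟨i.1+1+1, Nat.add_lt_add_right (Nat.add_lt_add_right i.isLt 1) 1⟩))))) - (∑ k : Fin (p+1), (-1 : ℝ) ^ (k.1 + 1) • (fcst C (z.2.2 (Nat.succ_pos (p+1))) (σ (z.1.2 ⟨0, Nat.succ_pos (p+1)⟩) (𝒢.extE E p ω (𝒢.src (z.1.2 ⟨0, Nat.succ_pos (p+1)⟩), 𝒢.faceTuple p (fun i : Fin (p+1) => z.1.2 ⟨i.1+1, Nat.add_lt_add_right i.isLt 1⟩) k.succ)))))) := by rw [h2]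
    _ = (fcst C (z.2.2 (Nat.succ_pos (p+1))) (ΔC (z.1.2 ⟨0, Nat.succ_pos (p+1)⟩) (fcst C ((z.2.1 0 (Nat.succ_lt_succ (Nat.succ_pos p))).symm) (σ (z.1.2 ⟨0+1, Nat.succ_lt_succ (Nat.succ_pos p)⟩) (𝒢.extE E p ω (𝒢.src (z.1.2 ⟨0+1, Nat.succ_lt_succ (Nat.succ_pos p)⟩), fun i : Fin p => z.1.2 ⟨i.1+1+1, Nat.add_lt_add_right (Nat.add_lt_add_right i.isLt 1) 1⟩)))))) - (fcst C ((𝒢.tgt_mul (z.1.2 ⟨0, Nat.succ_pos (p+1)⟩) (z.1.2 ⟨0+1, Nat.succ_lt_succ (Nat.succ_pos p)⟩) (z.2.1 0 (Nat.succ_lt_succ (Nat.succ_pos p)))).trans (z.2.2 (Nat.succ_pos (p+1)))) (σ (𝒢.mul (z.1.2 ⟨0, Nat.succ_pos (p+1)⟩) (z.1.2 ⟨0+1, Nat.succ_lt_succ (Nat.succ_pos p)⟩)) (fcst E ((𝒢.src_mul (z.1.2 ⟨0, Nat.succ_pos (p+1)⟩) (z.1.2 ⟨0+1, Nat.succ_lt_succ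 (Nat.succ_pos p)⟩) (z.2.1 0 (Nat.succ_lt_succ (Nat.succ_pos p)))).symm) (𝒢.extE E p ω (𝒢.src (z.1.2 ⟨0+1, Nat.succ_lt_succ (Nat.succ_pos p)⟩), fun i : Fin p => z.1.2 ⟨i.1+1+1, Nat.add_lt_add_right (Nat.add_lt_add_right i.isLt 1) 1⟩))))) - (∑ k : Fin (p+1), (-1 : ℝ) ^ (k.1 + 1) • (fcst C (z.2.2 (Nat.succ_pos (p+1))) (σ (z.1.2 ⟨0, Nat.succ_pos (p+1)⟩) (𝒢.extE E p ω (𝒢.src (z.1.2 ⟨0, Nat.succ_pos (p+1)⟩), 𝒢.faceTuple p (fun i : Fin (p+1) => z.1.2 ⟨i.1+1, Nat.add_lt_add_right i.isLt 1⟩) k.succ))))) := by abel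

theorem hatSigma_simpD_eq (ΔE : 𝒢.QAct E) (σ : 𝒢.Sigma1 E C) (p : ℕ)
    (ω : 𝒢.ECochain E p) (z : 𝒢.APt (p+2)) :
    𝒢.hatSigma E C σ (p+1) (𝒢.simpD E ΔE p ω) z = (fcst C (z.2.2 (Nat.succ_pos (p+1))) (σ (z.1.2 ⟨0, Nat.succ_pos (p+1)⟩) (fcst E ((z.2.1 0 (Nat.succ_lt_succ (Nat.succ_pos p))).symm) (ΔE (z.1.2 ⟨0+1, Nat.succ_lt_succ (Nat.succ_pos p)⟩) (𝒢.extE E p ω (𝒢.src (z.1.2 ⟨0+1, Nat.succ_lt_succ (Nat.succ_pos p)⟩), fun i : Fin p => z.1.2 ⟨i.1+1+1, Nat.add_lt_add_right (Nat.add_lt_add_right i.isLt 1) 1⟩)))))) + (∑ k : Fin (p+1), (-1 : ℝ) ^ (k.1 + 1) • (fcst C (z.2.2 (Nat.succ_pos (p+1))) (σ (z.1.2 ⟨0, Nat.succ_pos (p+1)⟩) (𝒢.extE E p ω (𝒢.src (z.1.2 ⟨0, Nat.succ_pos (p+1)⟩), 𝒢.faceTuple p (fun i : Fin (p+1) =>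 z.1.2 ⟨i.1+1, Nat.add_lt_add_right i.isLt 1⟩) k.succ))))) := by
  unfold hatSigma
  rw [𝒢.extE_pos E (p+1) _ _ (𝒢.anchored_shift (p+1) z)]
  have hsplit : (𝒢.simpD E ΔE p ω)
      ⟨(𝒢.src (z.1.2 ⟨0, Nat.succ_pos (p+1)⟩),
        fun i : Fin (p+1) => z.1.2 ⟨i.1+1, by have := i.isLt; omega⟩),
       𝒢.anchored_shift (p+1) z⟩
      = fcst E ((z.2.1 0 (Nat.succ_lt_succ (Nat.succ_pos p))).symm) (ΔE (z.1.2 ⟨0+1, Nat.succ_lt_succ (Nat.succ_pos p)⟩) (𝒢.extE E p ω (𝒢.src (z.1.2 ⟨0+1, Nat.succ_lt_succ (Nat.succ_pos p)⟩), fun i : Fin p => z.1.2 ⟨i.1+1+1, Nat.add_lt_add_right (Nat.add_lt_add_right i.isLt 1) 1⟩)))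
        + ∑ k : Fin (p+1), (-1 : ℝ) ^ (k.1 + 1) •
            𝒢.extE E p ω (𝒢.src (z.1.2 ⟨0, Nat.succ_pos (p+1)⟩), 𝒢.faceTuple p (fun i : Fin (p+1) => z.1.2 ⟨i.1+1, Nat.add_lt_add_right i.isLt 1⟩) k.succ) := rfl
  rw [hsplit, map_add, fcst_add]
  congr 1
  rw [map_sum, fcst_sum]
  exact Finset.sum_congr rfl (fun k _ => by rw [map_smul, fcst_smul])

theorem hatOmega_transD1_eq (ΔC : 𝒢.QAct C) (ΔE : 𝒢.QAct E) (σ : 𝒢.Sigma1 E C)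
    (p : ℕ) (ω : 𝒢.ECochain E p) (z : 𝒢.APt (p+2)) :
    𝒢.hatOmega E C (𝒢.transD1 E C ΔC ΔE σ) p ω z = (fcst C (z.2.2 (Nat.succ_pos (p+1))) (ΔC (z.1.2 ⟨0, Nat.succ_pos (p+1)⟩) (fcst C ((z.2.1 0 (Nat.succ_lt_succ (Nat.succ_pos p))).symm) (σ (z.1.2 ⟨0+1, Nat.succ_lt_succ (Nat.succ_pos p)⟩) (𝒢.extE E p ω (𝒢.src (z.1.2 ⟨0+1, Nat.succ_lt_succ (Nat.succ_pos p)⟩), fun i : Fin p => z.1.2 ⟨i.1+1+1, Nat.add_lt_add_right (Nat.add_lt_add_right i.isLt 1) 1⟩)))))) - (fcst C ((𝒢.tgt_mul (z.1.2 ⟨0, Nat.succ_pos (p+1)⟩) (z.1.2 ⟨0+1, Nat.succ_lt_succ (Nat.succ_pos p)⟩) (z.2.1 0 (Nat.succ_lt_succ (Nat.succ_pos p)))).trans (z.2.2 (Nat.succ_pos (p+1)))) (σ (𝒢.mul (z.1.2 ⟨0, Nat.succ_pos (p+1)⟩) (z.1.2 ⟨0+1, Nat.succ_lt_succ (Nat.succ_pos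 p)⟩)) (fcst E ((𝒢.src_mul (z.1.2 ⟨0, Nat.succ_pos (p+1)⟩) (z.1.2 ⟨0+1, Nat.succ_lt_succ (Nat.succ_pos p)⟩) (z.2.1 0 (Nat.succ_lt_succ (Nat.succ_pos p)))).symm) (𝒢.extE E p ω (𝒢.src (z.1.2 ⟨0+1, Nat.succ_lt_succ (Nat.succ_pos p)⟩), fun i : Fin p => z.1.2 ⟨i.1+1+1, Nat.add_lt_add_right (Nat.add_lt_add_right i.isLt 1) 1⟩))))) + (fcst C (z.2.2 (Nat.succ_pos (p+1))) (σ (z.1.2 ⟨0, Nat.succ_pos (p+1)⟩) (fcst E ((z.2.1 0 (Nat.succ_lt_succ (Nat.succ_pos p))).symm) (ΔE (z.1.2 ⟨0+1, Nat.succ_lt_succ (Nat.succ_pos p)⟩) (𝒢.extE E p ω (𝒢.src (z.1.2 ⟨0+1, Nat.succ_lt_succ (Nat.succ_pos p)⟩), fun i : Fin p => z.1.2 ⟨i.1+1+1, Nat.add_lt_add_right (Nat.add_lt_add_right i.isLt 1) 1⟩)))))) := by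
  unfold hatOmega transD1
  simp only [LinearMap.sub_apply, LinearMap.add_apply, LinearMap.comp_apply,
    lcast_apply, fcst_sub, fcst_add, fcst_trans]

theorem key_identity (ΔC : 𝒢.QAct C) (ΔE : 𝒢.QAct E) (σ : 𝒢.Sigma1 E C)
    (p : ℕ) (ω : 𝒢.ECochain E p) (z : 𝒢.APt (p+2)) :
    𝒢.simpD C ΔC (p+1) (𝒢.hatSigma E C σ p ω) z
        + 𝒢.hatSigma E C σ (p+1) (𝒢.simpD E ΔE p ω) z
      = 𝒢.hatOmega E C (𝒢.transD1 E C ΔC ΔE σ) p ω z := by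
  rw [𝒢.simpD_hatSigma_eq E C ΔC σ p ω z, 𝒢.hatSigma_simpD_eq E C ΔE σ p ω z,
    𝒢.hatOmega_transD1_eq E C ΔC ΔE σ p ω z]
  abel

end Main

end SetGroupoid

namespace SetGroupoid

set_option linter.unusedSectionVars false
set_option maxHeartbeats 1000000

variable {G M : Type} (𝒢 : SetGroupoid G M)

section Extraction
variable (E C : M → Type)
  [∀ x, AddCommGroup (E x)] [∀ x, Module ℝ (E x)]
  [∀ x, AddCommGroup (C x)] [∀ x, Module ℝ (C x)]

theorem simpD_zero_inj (F : M → Type) [∀ x, AddCommGroup (F x)] [∀ x, Module ℝ (F x)]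
    (Δ Δ' : 𝒢.QAct F)
    (h : ∀ β : 𝒢.ECochain F 0, 𝒢.simpD F Δ 0 β = 𝒢.simpD F Δ' 0 β) : Δ = Δ' := by
  funext g
  apply LinearMap.ext
  intro e
  have h1 := congrFun (h (fun w => if hx : 𝒢.src g = w.1.1 then fcst F hx e else 0)) (𝒢.pt1 g)
  unfold simpD at h1
  have h2 := add_right_cancel h1
  have hβ : 𝒢.extE F 0 (fun w => if hx : 𝒢.src g = w.1.1 then fcst F hx e else 0)
      (𝒢.src ((𝒢.pt1 g).1.2 ⟨0, Nat.succ_pos 0⟩),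
       fun i : Fin 0 => (𝒢.pt1 g).1.2 ⟨i.1 + 1, by have := i.isLt; omega⟩)
      = fcst F (rfl : 𝒢.src g = 𝒢.src g) e := by
    rw [𝒢.extE_pos F 0 _ _ (𝒢.anchored_zero _ _)]
    exact dif_pos rfl
  rw [hβ] at h2
  have h3 := congrArg (fcst F ((𝒢.pt1 g).2.2 (Nat.succ_pos 0)).symm) h2
  rw [fcst_fcst, fcst_fcst] at h3
  exact h3

theorem hatDel_zero (p : ℕ) (α : 𝒢.ECochain C p) :
    𝒢.hatDel E C (fun x => (0 : C x →ₗ[ℝ] E x)) p α = 0 := by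
  funext z; simp [hatDel]

theorem simpD_apply_zero (F : M → Type) [∀ x, AddCommGroup (F x)] [∀ x, Module ℝ (F x)]
    (Δ : 𝒢.QAct F) (p : ℕ) (z : 𝒢.APt (p+1)) :
    𝒢.simpD F Δ p (0 : 𝒢.ECochain F p) z = 0 := by
  unfold simpD
  rw [𝒢.extE_eq_zero F p (0 : 𝒢.ECochain F p) (fun w => rfl), map_zero, fcst_zero]
  simp [𝒢.extE_eq_zero F p (0 : 𝒢.ECochain F p) (fun w => rfl), fcst_zero]

theorem hatSigma_del0 (σ : 𝒢.Sigma1 E C) (p : ℕ) (α : 𝒢.ECochain C p) :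
    𝒢.hatSigma E C σ p (𝒢.hatDel E C (fun x => (0 : C x →ₗ[ℝ] E x)) p α) = 0 := by
  funext z
  exact 𝒢.hatSigma_apply_zero E C σ p _ (fun w => by simp [hatDel]) z

theorem hatOmega_pt2 (Ω : 𝒢.Omega2 E C) (g₀ g₁ : G) (hc : 𝒢.src g₀ = 𝒢.tgt g₁)
    (e : E (𝒢.src g₁)) :
    𝒢.hatOmega E C Ω 0 (fun w => if hx : 𝒢.src g₁ = w.1.1 then fcst E hx e else 0)
      (𝒢.pt2 g₀ g₁ hc) = Ω g₀ g₁ hc e := by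
  have harr0 : (𝒢.pt2 g₀ g₁ hc).1.2 ⟨0, by omega⟩ = g₀ := by simp [pt2]
  have harr1 : (𝒢.pt2 g₀ g₁ hc).1.2 ⟨1, by omega⟩ = g₁ := by simp [pt2]
  have hx : 𝒢.src g₁ = 𝒢.src ((𝒢.pt2 g₀ g₁ hc).1.2 ⟨1, by omega⟩) := by rw [harr1]
  have he : 𝒢.extE E 0 (fun w => if hx : 𝒢.src g₁ = w.1.1 then fcst E hx e else 0)
      (𝒢.src ((𝒢.pt2 g₀ g₁ hc).1.2 ⟨1, by omega⟩),
       fun i : Fin 0 => (𝒢.pt2 g₀ g₁ hc).1.2 ⟨i.1 + 2, by have := i.isLt; omega⟩)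
      = fcst E hx e := by
    rw [𝒢.extE_pos E 0 _ _ (𝒢.anchored_zero _ _)]
    exact dif_pos hx
  unfold hatOmega
  rw [he]
  exact 𝒢.omega_congr E C Ω harr0 harr1 _ hc hx rfl _ rfl e

theorem hatOmega_zero_inj (Ω₁ Ω₂ : 𝒢.Omega2 E C)
    (h : ∀ ω : 𝒢.ECochain E 0, 𝒢.hatOmega E C Ω₁ 0 ω = 𝒢.hatOmega E C Ω₂ 0 ω) :
    ∀ (g₀ g₁ : G) (hc : 𝒢.src g₀ = 𝒢.tgt g₁), Ω₁ g₀ g₁ hc = Ω₂ g₀ g₁ hc := by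
  intro g₀ g₁ hc
  apply LinearMap.ext
  intro e
  have h1 := congrFun (h (fun w => if hx : 𝒢.src g₁ = w.1.1 then fcst E hx e else 0))
    (𝒢.pt2 g₀ g₁ hc)
  rw [𝒢.hatOmega_pt2 E C Ω₁ g₀ g₁ hc e, 𝒢.hatOmega_pt2 E C Ω₂ g₀ g₁ hc e] at h1
  exact h1

end Extraction

end SetGroupoid

namespace SetGroupoid
variable {G M : Type} (𝒢 : SetGroupoid G M)

theorem type_zero_tuples_and_gauge_equivalence
    (E C : M → Type)
    [∀ x, AddCommGroup (E x)] [∀ x, Module ℝ (E x)]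
    [∀ x, AddCommGroup (C x)] [∀ x, Module ℝ (C x)]
    (hspanE : HasSpanningSections E) (hspanC : HasSpanningSections C) :
    -- (1) with ∂ = 0, the structure equations hold iff Δ^C and Δ^E are
    -- representations and DΩ = 0:
    (∀ (ΔC : 𝒢.QAct C) (ΔE : 𝒢.QAct E) (Ω : 𝒢.Omega2 E C),
      𝒢.IsUnitalQ C ΔC → 𝒢.IsUnitalQ E ΔE → 𝒢.IsNormalizedOmega E C Ω →
      (𝒢.IsRepHtpyTuple E C ΔC ΔE (fun x => (0 : C x →ₗ[ℝ] E x)) Ω ↔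
        ((𝒢.IsUnitalQ C ΔC ∧ 𝒢.IsFlatQ C ΔC) ∧ (𝒢.IsUnitalQ E ΔE ∧ 𝒢.IsFlatQ E ΔE) ∧
          ∀ (g₀ g₁ g₂ : G) (h₀ : 𝒢.src g₀ = 𝒢.tgt g₁) (h₁ : 𝒢.src g₁ = 𝒢.tgt g₂),
            𝒢.transD2 E C ΔC ΔE Ω g₀ g₁ g₂ h₀ h₁ = 0))) ∧
    -- (2) the operators of two type-0 tuples are conjugate by some `1 + σ̂`
    -- iff the quasi-actions agree and `Ω̃ = Ω - Dσ` for some normalized σ: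
    (∀ (ΔC Δ'C : 𝒢.QAct C) (ΔE Δ'E : 𝒢.QAct E) (Ω Ω' : 𝒢.Omega2 E C),
      𝒢.IsRepHtpyTuple E C ΔC ΔE (fun x => (0 : C x →ₗ[ℝ] E x)) Ω →
      𝒢.IsRepHtpyTuple E C Δ'C Δ'E (fun x => (0 : C x →ₗ[ℝ] E x)) Ω' →
      ((∃ σ : 𝒢.Sigma1 E C, 𝒢.IsNormalizedSigma E C σ ∧
          (∀ α, 𝒢.tupleOpNeg E C Δ'C (fun x => (0 : C x →ₗ[ℝ] E x)) α =
            𝒢.oneMinusSigma E C σ 0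
              (𝒢.tupleOpNeg E C ΔC (fun x => (0 : C x →ₗ[ℝ] E x)) α)) ∧
          (∀ p ωα, 𝒢.tupleOpPos E C Δ'C Δ'E (fun x => (0 : C x →ₗ[ℝ] E x)) Ω' p ωα =
            𝒢.oneMinusSigma E C σ (p+1)
              (𝒢.tupleOpPos E C ΔC ΔE (fun x => (0 : C x →ₗ[ℝ] E x)) Ω p
                (𝒢.onePlusSigma E C σ p ωα)))) ↔
        (Δ'C = ΔC ∧ Δ'E = ΔE ∧
          ∃ σ : 𝒢.Sigma1 E C, 𝒢.IsNormalizedSigma E C σ ∧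
            ∀ (g₀ g₁ : G) (h : 𝒢.src g₀ = 𝒢.tgt g₁),
              Ω' g₀ g₁ h = Ω g₀ g₁ h - 𝒢.transD1 E C ΔC ΔE σ g₀ g₁ h))) := by
  constructor
  · -- Part (1)
    intro ΔC ΔE Ω huC huE hnΩ
    constructor
    · rintro ⟨h1, h2, h3, h4, h5, h6, h7⟩
      refine ⟨⟨h1, fun g₁ g₂ h => ?_⟩, ⟨h2, fun g₁ g₂ h => ?_⟩,
        fun g₀ g₁ g₂ h₀ h₁ => h7 g₀ g₁ g₂ h₀ h₁⟩
      · have h5' := h5 g₁ g₂ h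
        simp only [LinearMap.comp_zero, add_zero] at h5'
        rwa [sub_eq_zero] at h5'
      · have h6' := h6 g₁ g₂ h
        simp only [LinearMap.zero_comp, add_zero] at h6'
        rwa [sub_eq_zero] at h6'
    · rintro ⟨⟨_, hfC⟩, ⟨_, hfE⟩, hD⟩
      refine ⟨huC, huE, hnΩ, fun g₁ => ?_, fun g₁ g₂ h => ?_, fun g₁ g₂ h => ?_,
        fun g₁ g₂ g₃ h₁ h₂ => hD g₁ g₂ g₃ h₁ h₂⟩
      · simp
      · simp only [LinearMap.comp_zero, add_zero]
        rw [sub_eq_zero]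
        exact hfC g₁ g₂ h
      · simp only [LinearMap.zero_comp, add_zero]
        rw [sub_eq_zero]
        exact hfE g₁ g₂ h
  · -- Part (2)
    intro ΔC Δ'C ΔE Δ'E Ω Ω' hT hT'
    constructor
    · rintro ⟨σ, hσn, hNeg, hPos⟩
      have hΔC : Δ'C = ΔC := by
        apply 𝒢.simpD_zero_inj C Δ'C ΔC
        intro β
        have h1 := congrArg Prod.snd (hNeg β)
        simp only [tupleOpNeg, oneMinusSigma] at h1
        rw [𝒢.hatSigma_del0 E C σ 0 β, sub_zero] at h1
        exact neg_inj.mp h1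
      have hΔE : Δ'E = ΔE := by
        apply 𝒢.simpD_zero_inj E Δ'E ΔE
        intro β
        have h1 := congrArg Prod.fst (hPos 0 (β, (0 : 𝒢.ECochain C (0+1))))
        simp only [tupleOpPos, oneMinusSigma, onePlusSigma] at h1
        simp only [𝒢.hatDel_zero E C, add_zero] at h1
        exact h1
      rw [hΔC, hΔE] at hPos
      have hkey : ∀ (ω : 𝒢.ECochain E 0) (zz : 𝒢.APt 2),
          𝒢.hatOmega E C Ω' 0 ω zz
            = 𝒢.hatOmega E C
                (fun g₁ g₂ h => Ω g₁ g₂ h - 𝒢.transD1 E C ΔC ΔE σ g₁ g₂ h) 0 ω zz := by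
        intro ω zz
        have h1 := congrArg Prod.snd (hPos 0 (ω, (0 : 𝒢.ECochain C (0+1))))
        simp only [tupleOpPos, oneMinusSigma, onePlusSigma, zero_add] at h1
        have h2 := congrFun h1 zz
        simp only [Pi.add_apply, Pi.neg_apply, Pi.sub_apply] at h2
        rw [𝒢.simpD_apply_zero C ΔC (0+1) zz] at h2
        rw [𝒢.hatSigma_apply_add E C σ (0+1) (𝒢.simpD E ΔE 0 ω)
          (𝒢.hatDel E C (fun x => (0 : C x →ₗ[ℝ] E x)) (0+1) (𝒢.hatSigma E C σ 0 ω)) zz] at h2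
        rw [𝒢.hatSigma_apply_zero E C σ (0+1)
          (𝒢.hatDel E C (fun x => (0 : C x →ₗ[ℝ] E x)) (0+1) (𝒢.hatSigma E C σ 0 ω))
          (fun w => by simp [hatDel]) zz, add_zero] at h2
        simp only [neg_zero, zero_add] at h2
        rw [h2, 𝒢.hatOmega_apply_sub E C Ω (𝒢.transD1 E C ΔC ΔE σ) 0 ω zz,
          ← 𝒢.key_identity E C ΔC ΔE σ 0 ω zz]
        abel
      have hfin := 𝒢.hatOmega_zero_inj E C Ω'
        (fun g₁ g₂ h => Ω g₁ g₂ h - 𝒢.transD1 E C ΔC ΔE σ g₁ g₂ h)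
        (fun ω => funext (fun zz => hkey ω zz))
      exact ⟨hΔC, hΔE, σ, hσn, fun g₀ g₁ h => hfin g₀ g₁ h⟩
    · rintro ⟨hΔC, hΔE, σ, hσn, hΩ⟩
      subst hΔC
      subst hΔE
      refine ⟨σ, hσn, fun α => ?_, fun p ωα => ?_⟩
      · refine Prod.ext rfl ?_
        show -(𝒢.simpD C Δ'C 0 α)
            = -(𝒢.simpD C Δ'C 0 α)
              - 𝒢.hatSigma E C σ 0 (𝒢.hatDel E C (fun x => (0 : C x →ₗ[ℝ] E x)) 0 α)
        rw [𝒢.hatSigma_del0 E C σ 0 α, sub_zero]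
      · obtain ⟨ω, α⟩ := ωα
        have hΩfun : Ω' = fun g₁ g₂ h => Ω g₁ g₂ h - 𝒢.transD1 E C Δ'C Δ'E σ g₁ g₂ h :=
          funext fun g₁ => funext fun g₂ => funext fun h => hΩ g₁ g₂ h
        refine Prod.ext ?_ ?_
        · show 𝒢.simpD E Δ'E p ω + 𝒢.hatDel E C (fun x => (0 : C x →ₗ[ℝ] E x)) (p+1) α
              = 𝒢.simpD E Δ'E p ω
                + 𝒢.hatDel E C (fun x => (0 : C x →ₗ[ℝ] E x)) (p+1)
                    (α + 𝒢.hatSigma E C σ p ω)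
          rw [𝒢.hatDel_zero E C, 𝒢.hatDel_zero E C]
        · show -(𝒢.simpD C Δ'C (p+1) α) + 𝒢.hatOmega E C Ω' p ω
              = (-(𝒢.simpD C Δ'C (p+1) (α + 𝒢.hatSigma E C σ p ω))
                  + 𝒢.hatOmega E C Ω p ω)
                - 𝒢.hatSigma E C σ (p+1)
                    (𝒢.simpD E Δ'E p ω
                      + 𝒢.hatDel E C (fun x => (0 : C x →ₗ[ℝ] E x)) (p+1)
                          (α + 𝒢.hatSigma E C σ p ω))
          funext zz
          simp only [Pi.add_apply, Pi.neg_apply, Pi.sub_apply]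
          rw [𝒢.simpD_apply_add C Δ'C (p+1) α (𝒢.hatSigma E C σ p ω) zz]
          rw [𝒢.hatSigma_apply_add E C σ (p+1) (𝒢.simpD E Δ'E p ω)
            (𝒢.hatDel E C (fun x => (0 : C x →ₗ[ℝ] E x)) (p+1)
              (α + 𝒢.hatSigma E C σ p ω)) zz]
          rw [𝒢.hatSigma_apply_zero E C σ (p+1)
            (𝒢.hatDel E C (fun x => (0 : C x →ₗ[ℝ] E x)) (p+1) (α + 𝒢.hatSigma E C σ p ω))
            (fun w => by simp [hatDel]) zz, add_zero]
          have h1 : 𝒢.hatOmega E C Ω' p ω zz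
              = 𝒢.hatOmega E C Ω p ω zz
                - 𝒢.hatOmega E C (𝒢.transD1 E C Δ'C Δ'E σ) p ω zz := by
            rw [hΩfun]
            exact 𝒢.hatOmega_apply_sub E C Ω (𝒢.transD1 E C Δ'C Δ'E σ) p ω zz
          rw [h1, ← 𝒢.key_identity E C Δ'C Δ'E σ p ω zz]
          abel


end SetGroupoid
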